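/- The full-conditional manifold is m-flat: if q0 and q1 are distributions belonging to E(θ) (that is, q0(x) = q0₋ᵢ(x)·θ(xᵢ,x) and q1(x) = q1₋ᵢ(x)·θ(xᵢ,x) for all x) and λ ∈ [0,1], then the convex combination qλ(x) = (1−λ)·q0(x) + λ·q1(x) is a distribution that also belongs to E(θ), i.e. qλ(x) = qλ₋ᵢ(x)·θ(xᵢ,x) for all x. -/
import Mathlib


open Finset

variable {ι : Type} [Fintype ι] [DecidableEq ι] [Nonempty ι]
  {α : ι → Type} [∀ i, Fintype (α i)] [∀ i, DecidableEq (α i)] [∀ i, Nonempty (α i)]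

/-- `p` is a probability distribution on the joint space `X = Π j, α j`. -/
def IsDist (p : (∀ j, α j) → ℝ) : Prop :=
  (∀ x, 0 ≤ p x) ∧ ∑ x, p x = 1

/-- The `i`-marginal `p₋ᵢ(x) = Σ_{a ∈ α i} p(x[i↦a])`. -/
noncomputable def marg (p : (∀ j, α j) → ℝ) (i : ι) (x : ∀ j, α j) : ℝ :=
  ∑ a, p (Function.update x i a)

/-- `θ` is a conditional probability table (CPT) at node `i`:
positive, normalized, and depending only on the coordinates other than `i`. -/
def IsCPT (i : ι) (θ : α i → (∀ j, α j) → ℝ) : Prop :=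
  (∀ a x, 0 < θ a x) ∧ (∀ x, ∑ a, θ a x = 1) ∧
  (∀ a x (b : α i), θ a (Function.update x i b) = θ a x)

/-- `q` belongs to the full-conditional manifold `E(θ)`:
`q(x) = q₋ᵢ(x)·θ(xᵢ,x)` for all `x`. -/
noncomputable def memE (i : ι) (θ : α i → (∀ j, α j) → ℝ) (q : (∀ j, α j) → ℝ) : Prop :=
  ∀ x, q x = marg q i x * θ (x i) x

/-- Theorem 1, m-flatness: the full-conditional manifold is m-flat. -/
theorem fullConditionalManifold_mFlat (i : ι) (θ : α i → (∀ j, α j) → ℝ)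
    (hθ : IsCPT i θ) (q0 q1 : (∀ j, α j) → ℝ)
    (h0 : IsDist q0) (h1 : IsDist q1)
    (hE0 : memE i θ q0) (hE1 : memE i θ q1)
    (l : ℝ) (hl0 : 0 ≤ l) (hl1 : l ≤ 1) :
    IsDist (fun x => (1 - l) * q0 x + l * q1 x) ∧
    memE i θ (fun x => (1 - l) * q0 x + l * q1 x) := by
  constructor
  · constructor
    · intro x
      have := h0.1 x; have := h1.1 x
      show 0 ≤ (1 - l) * q0 x + l * q1 x
      nlinarith
    · simp only [Finset.sum_add_distrib, ← Finset.mul_sum, h0.2, h1.2]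
      ring
  · intro x
    have hm : marg (fun x => (1 - l) * q0 x + l * q1 x) i x
        = (1 - l) * marg q0 i x + l * marg q1 i x := by
      simp [marg, Finset.sum_add_distrib, Finset.mul_sum]
    simp only [hm, hE0 x, hE1 x]
    ring
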